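/- If a binary word v is even and contains at least one 1, and v is a factor of some word in R = (1000)^*(100)(10)^*(100)(100)^* such that v overlaps both the (1000)^* block and the (10)^* block (i.e., v contains the middle (100) as a factor straddling both blocks), then v has period structure 0^k 1 (0^2 1)^p 0^s with k+s = 2. -/

import Mathlib

/-- k-fold concatenation of a word -/
def pw (u : List Bool) (k : ℕ) : List Bool := (List.replicate k u).flatten

/-- a block of `s` zeros -/
def zeros (s : ℕ) : List Bool := List.replicate s false

/-- `w` is an abelian square: `w = s ++ t` with `t` a permutation of `s`
(equivalently over a binary alphabet: equal length and equal number of 1's). -/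
def IsAbelianSquare (w : List Bool) : Prop :=
  ∃ s t : List Bool, w = s ++ t ∧ s.length = t.length ∧ s.count true = t.count true

def w4 : List Bool := [true, false, false, false]
def w3 : List Bool := [true, false, false]
def w2 : List Bool := [true, false]

/-- the word z = (1000)^n (100) (10)^(n!+n) (100) (100)^(2(n!+n)) -/
def Z (n : ℕ) : List Bool :=
  pw w4 n ++ w3 ++ pw w2 (n.factorial + n) ++ w3 ++ pw w3 (2 * (n.factorial + n))

/-- membership in the regular language R = (1000)^* (100) (10)^* (100) (100)^* -/
def InR (w : List Bool) : Prop :=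
  ∃ a b c : ℕ, w = pw w4 a ++ w3 ++ pw w2 b ++ w3 ++ pw w3 c

/-- the gap sequence `[s_0, s_1, ..., s_k]` of `w = 0^{s_0} 1 0^{s_1} 1 ⋯ 1 0^{s_k}` -/
def gaps (w : List Bool) : List ℕ := (w.splitOn true).map List.length

/-- `alt w` = number of indices `1 ≤ i < k` with `s_i ≠ s_{i+1}` -/
def alt (w : List Bool) : ℕ :=
  ((gaps w).tail.zip (gaps w).tail.tail).countP (fun p => decide (p.1 ≠ p.2))

/-- writing `w = 0^{s_1} 1 0^{s_2} 1 ⋯ 0^{s_k} 1 0^{s_{k+1}}` (with k ones),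
the cyclic sequence `(s_1 + s_{k+1}, s_2, …, s_k)` -/
def cyclicGaps (w : List Bool) : List ℕ :=
  ((gaps w).headI + (gaps w).getLast!) :: (gaps w).tail.dropLast

/-- `w` (containing a 1) is uneven: the cyclic gap sequence has length > 1 and
two cyclically adjacent unequal entries (equivalently it is not constant) -/
def Uneven (w : List Bool) : Prop :=
  2 ≤ w.count true ∧ ¬ (cyclicGaps w).Chain' (· = ·)

/-- `w` (containing a 1) is even if it is not uneven -/
def EvenWord (w : List Bool) : Prop := true ∈ w ∧ ¬ Uneven w

lemma pw_zero (u : List Bool) : pw u 0 = [] := rfl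
lemma pw_succ (u : List Bool) (k : ℕ) : pw u (k+1) = u ++ pw u k := by
  simp [pw, List.replicate_succ]

lemma length_pw (u : List Bool) (k : ℕ) : (pw u k).length = k * u.length := by
  induction k with
  | zero => simp [pw]
  | succ n ih => simp [pw_succ, ih]; ring

lemma length_zeros (s : ℕ) : (zeros s).length = s := by simp [zeros]

lemma splitOn_true_cons (w : List Bool) :
    (true :: w).splitOn true = [] :: w.splitOn true := by
  simp [List.splitOn, List.splitOnP_cons]

lemma splitOn_false_cons (w : List Bool) :
    (false :: w).splitOn true = (w.splitOn true).modifyHead (List.cons false) := by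
  simp [List.splitOn, List.splitOnP_cons]

/-- structure lemma: any word containing a 1 decomposes by its gaps -/
lemma structure_of_mem : ∀ (v : List Bool), true ∈ v →
    ∃ (k : ℕ) (G : List ℕ) (s : ℕ),
      v.splitOn true = (zeros k :: G.map zeros) ++ [zeros s] ∧
      v = zeros k ++ [true] ++ (G.map (fun t => zeros t ++ [true])).flatten ++ zeros s := by
  intro v
  induction v with
  | nil => simp
  | cons hd tl ih =>
    intro hmem
    cases hd with
    | true =>
      by_cases htl : true ∈ tl
      · obtain ⟨k, G, s, hsp, hsh⟩ := ih htl
        refine ⟨0, k :: G, s, ?_, ?_⟩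
        · rw [splitOn_true_cons, hsp]; rfl
        · rw [hsh]; simp [zeros]
      · have htlz : tl = zeros tl.length := by
          apply List.eq_replicate_length.2
          intro b hb; cases b; rfl; exact absurd hb htl
        refine ⟨0, [], tl.length, ?_, ?_⟩
        · rw [splitOn_true_cons, List.splitOn, List.splitOnP_eq_single]
          · rw [← htlz]; rfl
          · intro x hx; cases x; simp; exact absurd hx htl
        · simp [zeros, pw_zero]
          exact htlz
    | false =>
      have htl : true ∈ tl := by simpa using hmem
      obtain ⟨k, G, s, hsp, hsh⟩ := ih htl
      refine ⟨k + 1, G, s, ?_, ?_⟩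
      · rw [splitOn_false_cons, hsp]
        simp [zeros, List.replicate_succ]
      · simp [zeros, List.replicate_succ, hsh]

lemma chain_const : ∀ (G : List ℕ) (g : ℕ), List.Chain' (· = ·) (g :: G) →
    G = List.replicate G.length g := by
  intro G
  induction G with
  | nil => intros; rfl
  | cons a G ih =>
    intro g h
    simp only [List.Chain', List.isChain_cons_cons] at h
    obtain ⟨rfl, h2⟩ := h
    rw [List.length_cons, List.replicate_succ]
    exact congrArg _ (ih _ h2)

lemma count_zeros (n : ℕ) : (zeros n).count true = 0 := by
  simp [zeros, List.count_replicate]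

lemma count_flatten_map (G : List ℕ) :
    ((G.map (fun t => zeros t ++ [true])).flatten).count true = G.length := by
  induction G with
  | nil => rfl
  | cons a G ih => simp [List.count_append, ih, count_zeros]

lemma getElem?_zeros (n j : ℕ) : (zeros n)[j]? = if j < n then some false else none := by
  simp [zeros, List.getElem?_replicate]

/-- positions of ones in `1 (0^g 1)^p` -/
lemma E_get (g : ℕ) : ∀ (p j : ℕ),
    (true :: pw (zeros g ++ [true]) p)[j]? = some true ↔ (g+1) ∣ j ∧ j < 1 + p*(g+1) := by
  intro p
  induction p with
  | zero =>
    intro j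
    rw [pw_zero]
    cases j with
    | zero => simp
    | succ n =>
      simp only [List.getElem?_cons_succ, List.getElem?_nil]
      constructor
      · intro h; cases h
      · rintro ⟨-, h⟩; omega
  | succ p ih =>
    intro j
    have hE : (true :: pw (zeros g ++ [true]) (p+1)) =
        (true :: zeros g) ++ (true :: pw (zeros g ++ [true]) p) := by
      rw [pw_succ]; simp
    have hlen : (true :: zeros g).length = g + 1 := by simp [zeros]
    have hx : (p+1)*(g+1) = p*(g+1) + (g+1) := by ring
    rw [hE]
    rcases Nat.lt_or_ge j (g+1) with hj | hj
    · rw [List.getElem?_append_left (by omega)]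
      cases j with
      | zero => simp
      | succ n =>
        simp only [List.getElem?_cons_succ]
        rw [getElem?_zeros, if_pos (by omega)]
        constructor
        · intro h; cases h
        · rintro ⟨hd, -⟩
          exact absurd (Nat.le_of_dvd n.succ_pos hd) (by omega)
    · rw [List.getElem?_append_right (by omega), hlen, ih]
      constructor
      · rintro ⟨hd, hlt⟩
        refine ⟨?_, by omega⟩
        have hj' : j = (j - (g+1)) + (g+1) := by omega
        rw [hj']; exact Nat.dvd_add hd ⟨1, by ring⟩
      · rintro ⟨hd, hlt⟩
        exact ⟨Nat.dvd_sub hd dvd_rfl, by omega⟩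

lemma sandwich_get (k s : ℕ) (E : List Bool) (j : ℕ)
    (h : (zeros k ++ E ++ zeros s)[j]? = some true) :
    k ≤ j ∧ (j - k) < E.length ∧ E[j-k]? = some true := by
  rcases Nat.lt_or_ge j k with hj | hj
  · rw [List.append_assoc, List.getElem?_append_left (by rw [length_zeros]; omega),
      getElem?_zeros, if_pos hj] at h
    simp at h
  · rw [List.append_assoc, List.getElem?_append_right (by rw [length_zeros]; omega),
      length_zeros] at h
    rcases Nat.lt_or_ge (j - k) E.length with hE | hE
    · rw [List.getElem?_append_left hE] at h
      exact ⟨hj, hE, h⟩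
    · rw [List.getElem?_append_right hE, getElem?_zeros] at h
      split at h <;> simp at h

lemma sandwich_get' (k s : ℕ) (E : List Bool) (j : ℕ) (hk : k ≤ j) (hE : j - k < E.length) :
    (zeros k ++ E ++ zeros s)[j]? = E[j-k]? := by
  rw [List.append_assoc, List.getElem?_append_right (by rw [length_zeros]; omega),
    length_zeros, List.getElem?_append_left hE]

theorem stmt15 (v : List Bool) (h1 : true ∈ v) (he : EvenWord v)
    (a b c : ℕ) (u y : List Bool)
    (hfac : u ++ v ++ y = pw w4 a ++ w3 ++ pw w2 b ++ w3 ++ pw w3 c)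
    (hleft : u.length < 4 * a)
    (hright : 4 * a + 3 < u.length + v.length) :
    ∃ k p s : ℕ, k + s = 2 ∧
      v = zeros k ++ [true] ++ pw (zeros 2 ++ [true]) p ++ zeros s := by
  simp only [List.append_assoc] at hfac
  set T : List Bool := w3 ++ (pw w2 b ++ (w3 ++ pw w3 c)) with hT
  have hlen4 : (pw w4 a).length = 4 * a := by rw [length_pw]; simp [w4]; ring
  have hWj : ∀ j : ℕ, (pw w4 a ++ T)[4*a + j]? = T[j]? := by
    intro j
    rw [List.getElem?_append_right (by omega)]
    congr 1
    omega
  set i := 4 * a - u.length with hi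
  have hi3 : i + 3 < v.length := by omega
  have key : ∀ j, j < v.length → 4*a ≤ u.length + j → v[j]? = T[u.length + j - 4*a]? := by
    intro j hj hj2
    have h1 : (u ++ (v ++ y))[u.length + j]? = v[j]? := by
      rw [List.getElem?_append_right (Nat.le_add_right _ _)]
      simp [List.getElem?_append_left hj]
    rw [← h1, hfac]
    have h2 := hWj (u.length + j - 4*a)
    rw [show 4*a + (u.length + j - 4*a) = u.length + j by omega] at h2
    exact h2
  have h0 : v[i]? = some true := by
    rw [key i (by omega) (by omega), show u.length + i - 4*a = 0 by omega, hT]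
    simp [w3]
  have h1' : v[i+1]? = some false := by
    rw [key (i+1) (by omega) (by omega), show u.length + (i+1) - 4*a = 1 by omega, hT]
    simp [w3]
  have h3 : v[i+3]? = some true := by
    rw [key (i+3) (by omega) (by omega), show u.length + (i+3) - 4*a = 3 by omega, hT]
    rw [List.getElem?_append_right (by simp [w3])]
    simp only [w3, List.length_cons, List.length_nil]
    cases b with
    | zero => simp [pw_zero, w3]
    | succ b => simp [pw_succ, w2]
  obtain ⟨k, G, s, hsp, hsh⟩ := structure_of_mem v h1
  -- G nonempty
  have hGne : G ≠ [] := by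
    intro hG
    rw [hG] at hsh
    simp only [List.map_nil, List.flatten_nil, List.append_nil] at hsh
    have e0 := sandwich_get k s [true] i (by rw [← hsh]; exact h0)
    have e3 := sandwich_get k s [true] (i+3) (by rw [← hsh]; exact h3)
    simp only [List.length_cons, List.length_nil] at e0 e3
    omega
  have hcount : v.count true = G.length + 1 := by
    rw [hsh]
    simp [List.count_append, count_zeros, count_flatten_map]
  have hg : gaps v = k :: (G ++ [s]) := by
    unfold gaps
    rw [hsp]
    have hid : (List.length ∘ zeros) = id := funext length_zeros
    simp [length_zeros, List.map_map, hid]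
  have hlast : (k :: (G ++ [s])).getLast! = s := by
    have h : (k :: (G ++ [s])) = (k :: G) ++ [s] := by simp
    rw [h]
    exact List.getLast!_of_getLast? List.getLast?_concat
  have hcg : cyclicGaps v = (k + s) :: G := by
    unfold cyclicGaps
    rw [hg, hlast]
    simp [List.headI, List.dropLast_concat]
  have hch : (cyclicGaps v).Chain' (· = ·) := by
    by_contra hc
    refine he.2 ⟨?_, hc⟩
    rw [hcount]
    have : 1 ≤ G.length := List.length_pos_iff.2 hGne
    omega
  rw [hcg] at hch
  have hG : G = List.replicate G.length (k+s) := chain_const G (k+s) hch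
  set g := k + s with hgdef
  set p := G.length with hp
  have hv2 : v = zeros k ++ (true :: pw (zeros g ++ [true]) p) ++ zeros s := by
    rw [hsh, hG]
    simp [pw, List.map_replicate, List.append_assoc]
  obtain ⟨hk0, hlt0, hE0⟩ := sandwich_get k s _ i (by rw [← hv2]; exact h0)
  obtain ⟨hk3, hlt3, hE3⟩ := sandwich_get k s _ (i+3) (by rw [← hv2]; exact h3)
  rw [E_get] at hE0 hE3
  have hd3 : (g+1) ∣ 3 := by
    have hsub := Nat.dvd_sub hE3.1 hE0.1
    have : i + 3 - k - (i - k) = 3 := by omega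
    rwa [this] at hsub
  have hgle : g + 1 ≤ 3 := Nat.le_of_dvd (by norm_num) hd3
  have hlen : (true :: pw (zeros g ++ [true]) p).length = 1 + p * (g+1) := by
    simp [length_pw, length_zeros]
    ring
  rcases (by omega : g = 0 ∨ g = 1 ∨ g = 2) with hg0 | hg0 | hg0
  · -- g = 0 : contradiction with v[i+1] = false
    exfalso
    rw [hg0] at hv2 hlt3
    have hE1 : (true :: pw (zeros 0 ++ [true]) p)[i+1-k]? = some true := by
      rw [E_get]
      refine ⟨one_dvd _, ?_⟩
      rw [hg0] at hlen
      omega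
    have heq := sandwich_get' k s (true :: pw (zeros 0 ++ [true]) p) (i+1) (by omega) (by omega)
    rw [← hv2, hE1, h1'] at heq
    cases heq
  · -- g = 1 : impossible since 2 ∤ 3
    exfalso
    rw [hg0] at hd3
    omega
  · -- g = 2
    rw [hg0] at hv2
    refine ⟨k, p, s, by omega, ?_⟩
    rw [hv2]
    simp [List.append_assoc]
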